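/- Let E_A = (d/d⁺)·(I+V)/2 with d⁺ = d(d+1)/2. For every channel-positive operator w on C^d ⊗ C^d (i.e., w^{T_A} ≥ 0) with Tr w = 1, one has 1/(d+1) ≤ Tr(w E_A) ≤ 1, and both bounds are attained. -/

import Mathlib

open Matrix Kronecker BigOperators
open scoped ComplexOrder

/-- The swap operator `V = ∑ i j, |ij⟩⟨ji|` on `C^d ⊗ C^d`. -/
noncomputable def swapOp (d : ℕ) : Matrix (Fin d × Fin d) (Fin d × Fin d) ℂ :=
  fun p q => if p.1 = q.2 ∧ p.2 = q.1 then 1 else 0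

/-- Partial transpose on the first tensor factor. -/
noncomputable def ptransposeA {d : ℕ} (ρ : Matrix (Fin d × Fin d) (Fin d × Fin d) ℂ) :
    Matrix (Fin d × Fin d) (Fin d × Fin d) ℂ :=
  fun p q => ρ (q.1, p.2) (p.1, q.2)

/-- Twirled agreement POVM element `E_A = (d/d⁺) (I+V)/2`, `d⁺ = d(d+1)/2`. -/
noncomputable def agreePOVM (d : ℕ) : Matrix (Fin d × Fin d) (Fin d × Fin d) ℂ :=
  ((d : ℝ) / ((d : ℝ) * ((d : ℝ) + 1) / 2)) •
    ((1 / 2 : ℝ) • ((1 : Matrix (Fin d × Fin d) (Fin d × Fin d) ℂ) + swapOp d))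

lemma psd_offdiag {n : Type*} [Fintype n] [DecidableEq n] (ρ : Matrix n n ℂ)
    (h : ρ.PosSemidef) (p q : n) : ρ p q + ρ q p ≤ ρ p p + ρ q q := by
  by_cases hpq : p = q
  · subst hpq; exact le_refl _
  · set v : n → ℂ := Pi.single p 1 - Pi.single q 1 with hv
    have h0 := h.dotProduct_mulVec_nonneg v
    have hsv : star v = v := by
      funext r
      simp [hv, Pi.single_apply, apply_ite (starRingEnd ℂ)]
    have key : ∀ a b : n, ∑ x : n, (if x = a then (1:ℂ) else 0) * ρ x b = ρ a b := by
      intro a b; simp [ite_mul, Finset.sum_ite_eq']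
    have hc : star v ⬝ᵥ ρ.mulVec v = ρ p p + ρ q q - (ρ p q + ρ q p) := by
      rw [hsv, hv]
      simp only [mulVec_sub, mulVec_single, sub_dotProduct, dotProduct_sub, single_dotProduct,
        dotProduct, Pi.single_apply, Pi.sub_apply, mul_one]
      simp only [sub_mul, mul_sub, Finset.sum_sub_distrib, key, Pi.smul_apply, MulOpposite.op_one, one_smul,
        Matrix.col_apply]
      ring
    rw [hc] at h0
    exact sub_nonneg.mp h0

lemma diag_nonneg' {n : Type*} [Fintype n] [DecidableEq n] (ρ : Matrix n n ℂ)
    (h : ρ.PosSemidef) (p : n) : 0 ≤ ρ p p := by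
  have h0 := h.dotProduct_mulVec_nonneg (Pi.single p (1:ℂ))
  have heq : star (Pi.single p (1:ℂ) : n → ℂ) ⬝ᵥ ρ.mulVec (Pi.single p (1:ℂ)) = ρ p p := by
    have hs : star (Pi.single p (1:ℂ) : n → ℂ) = (Pi.single p (1:ℂ) : n → ℂ) := by
      funext r; by_cases hr : r = p <;> simp [Pi.single_apply, hr]
    rw [hs]
    simp [mulVec_single, single_dotProduct]
  rwa [heq] at h0

lemma quad_diag {d : ℕ} (ρ : Matrix (Fin d × Fin d) (Fin d × Fin d) ℂ) :
    star (fun p : Fin d × Fin d => if p.1 = p.2 then (1:ℂ) else 0) ⬝ᵥ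
      ρ.mulVec (fun p => if p.1 = p.2 then 1 else 0)
      = ∑ i : Fin d, ∑ j : Fin d, ρ (i,i) (j,j) := by
  simp only [dotProduct, mulVec, Pi.star_apply, apply_ite (starRingEnd ℂ), _root_.map_one,
    _root_.map_zero, mul_ite, mul_one, mul_zero, ite_mul, one_mul, zero_mul]
  rw [Fintype.sum_prod_type]
  simp [Fintype.sum_prod_type, Finset.sum_ite_eq, dotProduct]

lemma S_le {d : ℕ} (ρ : Matrix (Fin d × Fin d) (Fin d × Fin d) ℂ) (h : ρ.PosSemidef) :
    ∑ i : Fin d, ∑ j : Fin d, ρ (i,i) (j,j) ≤ (d : ℂ) * ρ.trace := by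
  set S := ∑ i : Fin d, ∑ j : Fin d, ρ (i,i) (j,j) with hS
  set T := ∑ i : Fin d, ρ (i,i) (i,i) with hT
  have h2 : S + S ≤ (d:ℂ) * T + (d:ℂ) * T := by
    have hle : ∑ i : Fin d, ∑ j : Fin d, (ρ (i,i) (j,j) + ρ (j,j) (i,i))
        ≤ ∑ i : Fin d, ∑ j : Fin d, (ρ (i,i) (i,i) + ρ (j,j) (j,j)) := by
      refine Finset.sum_le_sum fun i _ => Finset.sum_le_sum fun j _ => ?_
      exact psd_offdiag ρ h (i,i) (j,j)
    calc S + S = ∑ i : Fin d, ∑ j : Fin d, (ρ (i,i) (j,j) + ρ (j,j) (i,i)) := by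
          have hswap : S = ∑ i : Fin d, ∑ j : Fin d, ρ (j,j) (i,i) := Finset.sum_comm
          calc S + S = (∑ i : Fin d, ∑ j : Fin d, ρ (i,i) (j,j))
                + ∑ i : Fin d, ∑ j : Fin d, ρ (j,j) (i,i) := by rw [← hS, ← hswap]
            _ = _ := by
                rw [← Finset.sum_add_distrib]
                exact Finset.sum_congr rfl fun i _ => (Finset.sum_add_distrib).symm
      _ ≤ ∑ i : Fin d, ∑ j : Fin d, (ρ (i,i) (i,i) + ρ (j,j) (j,j)) := hle
      _ = (d:ℂ) * T + (d:ℂ) * T := by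
          simp only [Finset.sum_add_distrib, Finset.sum_const, Finset.card_univ,
            Fintype.card_fin, nsmul_eq_mul]
          rw [hT, Finset.mul_sum]
  have hhalf : S ≤ (d:ℂ) * T := by
    have hhc : (0:ℂ) ≤ 2⁻¹ := by
      have h21 : ((2⁻¹ : ℝ) : ℂ) = (2⁻¹ : ℂ) := by norm_num
      rw [← h21]
      exact Complex.zero_le_real.mpr (by norm_num)
    have h3 := mul_le_mul_of_nonneg_left h2 hhc
    calc S = 2⁻¹ * (S + S) := by ring
      _ ≤ 2⁻¹ * ((d:ℂ)*T + (d:ℂ)*T) := h3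
      _ = (d:ℂ) * T := by ring
  refine hhalf.trans ?_
  refine mul_le_mul_of_nonneg_left ?_ (by exact_mod_cast Complex.zero_le_real.mpr (Nat.cast_nonneg d))
  rw [hT, Matrix.trace]
  rw [show (∑ p : Fin d × Fin d, ρ.diag p) = ∑ i : Fin d, ∑ j : Fin d, ρ (i,j) (i,j) from by
    rw [Fintype.sum_prod_type]; rfl]
  refine Finset.sum_le_sum fun i _ => ?_
  exact Finset.single_le_sum (f := fun j => ρ (i,j) (i,j))
    (fun j _ => diag_nonneg' ρ h (i,j)) (Finset.mem_univ i)

lemma trace_swap_mul {d : ℕ} (w : Matrix (Fin d × Fin d) (Fin d × Fin d) ℂ) :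
    (w * swapOp d).trace = ∑ i : Fin d, ∑ j : Fin d, w (j,i) (i,j) := by
  rw [Matrix.trace]
  simp only [Matrix.diag, Matrix.mul_apply, swapOp]
  rw [Fintype.sum_prod_type]
  simp only [Fintype.sum_prod_type, mul_ite, mul_one, mul_zero, ite_and]
  simp [Finset.sum_ite_eq, Finset.sum_ite_eq']
  exact Finset.sum_comm

lemma trace_formula {d : ℕ} (hd0 : (d:ℝ) ≠ 0) (w : Matrix (Fin d × Fin d) (Fin d × Fin d) ℂ) :
    (w * agreePOVM d).trace
      = ((1 / ((d : ℝ) + 1) : ℝ) : ℂ) * (w.trace + ∑ i : Fin d, ∑ j : Fin d, w (j,i) (i,j)) := by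
  have hd1 : (d:ℝ) + 1 ≠ 0 := by positivity
  rw [agreePOVM, Matrix.mul_smul, Matrix.mul_smul, Matrix.mul_add, Matrix.mul_one,
    Matrix.trace_smul, Matrix.trace_smul, Matrix.trace_add, trace_swap_mul]
  rw [smul_smul, Complex.real_smul]
  congr 1
  norm_cast
  field_simp
  push_cast; ring

lemma trace_ptranspose {d : ℕ} (w : Matrix (Fin d × Fin d) (Fin d × Fin d) ℂ) :
    (ptransposeA w).trace = w.trace := by
  simp [Matrix.trace, ptransposeA, Matrix.diag]

theorem stmt11 (d : ℕ) (hd : 2 ≤ d) :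
    (∀ w : Matrix (Fin d × Fin d) (Fin d × Fin d) ℂ,
        (ptransposeA w).PosSemidef → w.trace = 1 →
        ((1 / ((d : ℝ) + 1) : ℝ) : ℂ) ≤ (w * agreePOVM d).trace ∧
          (w * agreePOVM d).trace ≤ 1) ∧
    (∃ w : Matrix (Fin d × Fin d) (Fin d × Fin d) ℂ,
        (ptransposeA w).PosSemidef ∧ w.trace = 1 ∧
        (w * agreePOVM d).trace = ((1 / ((d : ℝ) + 1) : ℝ) : ℂ)) ∧
    (∃ w : Matrix (Fin d × Fin d) (Fin d × Fin d) ℂ,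
        (ptransposeA w).PosSemidef ∧ w.trace = 1 ∧
        (w * agreePOVM d).trace = 1) := by
  have hd0 : (d:ℝ) ≠ 0 := by
    have : 0 < d := by omega
    exact_mod_cast this.ne'
  have hc0 : (0:ℂ) ≤ ((1 / ((d : ℝ) + 1) : ℝ) : ℂ) :=
    Complex.zero_le_real.mpr (by positivity)
  refine ⟨?_, ?_, ?_⟩
  · intro w hw htr
    set S := ∑ i : Fin d, ∑ j : Fin d, w (j,i) (i,j) with hSdef
    have hS0 : 0 ≤ S := by
      have hq := hw.dotProduct_mulVec_nonneg (fun p => if p.1 = p.2 then 1 else 0)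
      rwa [quad_diag] at hq
    have hSd : S ≤ (d:ℂ) := by
      have := S_le (ptransposeA w) hw
      rwa [trace_ptranspose, htr, mul_one] at this
    rw [trace_formula hd0, htr, ← hSdef]
    constructor
    · calc ((1 / ((d : ℝ) + 1) : ℝ) : ℂ) = ((1 / ((d : ℝ) + 1) : ℝ) : ℂ) * 1 := by ring
        _ ≤ ((1 / ((d : ℝ) + 1) : ℝ) : ℂ) * (1 + S) :=
            mul_le_mul_of_nonneg_left (le_add_of_nonneg_right hS0) hc0
    · calc ((1 / ((d : ℝ) + 1) : ℝ) : ℂ) * (1 + S)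
          ≤ ((1 / ((d : ℝ) + 1) : ℝ) : ℂ) * (1 + (d:ℂ)) :=
            mul_le_mul_of_nonneg_left (by simpa [add_comm] using add_le_add_left hSd 1) hc0
        _ = 1 := by
            have hd1 : ((d:ℂ) + 1) ≠ 0 := by
              have : ((d:ℝ) + 1) ≠ 0 := by positivity
              exact_mod_cast this
            push_cast
            field_simp
            ring
  · -- lower bound attained: w = |01⟩⟨01|
    set e : Fin d := ⟨0, by omega⟩
    set f : Fin d := ⟨1, by omega⟩
    have hef : e ≠ f := by simp [e, f, Fin.ext_iff]
    set x0 : Fin d × Fin d := (e, f) with hx0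
    set w1 : Matrix (Fin d × Fin d) (Fin d × Fin d) ℂ :=
      fun p q => if p = x0 ∧ q = x0 then 1 else 0 with hw1
    refine ⟨w1, ?_, ?_, ?_⟩
    · have hpt : ptransposeA w1 = w1 := by
        funext p q
        obtain ⟨p1, p2⟩ := p; obtain ⟨q1, q2⟩ := q
        simp only [ptransposeA, hw1, hx0, Prod.mk.injEq]
        split_ifs with h1 h2 <;> first | rfl | tauto
      rw [hpt]
      refine Matrix.PosSemidef.of_dotProduct_mulVec_nonneg ?_ ?_
      · ext p q
        rw [Matrix.conjTranspose_apply]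
        simp only [Matrix.conjTranspose_apply, hw1, apply_ite (star : ℂ → ℂ),
          star_one, star_zero]
        split_ifs with h1 h2 <;> first | rfl | tauto
      · intro v
        have hq : star v ⬝ᵥ w1.mulVec v = star (v x0) * v x0 := by
          simp [hw1, dotProduct, mulVec, ite_and, ite_mul, mul_ite, mul_zero, zero_mul,
            Finset.sum_ite_eq', Finset.sum_ite_eq]
        rw [hq]
        exact star_mul_self_nonneg (v x0)
    · simp [hw1, Matrix.trace, Matrix.diag, Finset.sum_ite_eq']
    · rw [trace_formula hd0]
      have htr1 : w1.trace = 1 := by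
        simp [hw1, Matrix.trace, Matrix.diag, Finset.sum_ite_eq']
      have hS1 : (∑ i : Fin d, ∑ j : Fin d, w1 (j,i) (i,j)) = 0 := by
        refine Finset.sum_eq_zero fun i _ => Finset.sum_eq_zero fun j _ => ?_
        rw [hw1]
        simp only
        rw [if_neg]
        rintro ⟨h1, h2⟩
        rw [hx0, Prod.mk.injEq] at h1 h2
        exact hef (h2.1.symm.trans h1.2)
      rw [htr1, hS1]
      ring
  · -- upper bound attained: w = V/d
    have hd0c : (d:ℂ) ≠ 0 := by exact_mod_cast hd0
    have hdinv : (0:ℂ) ≤ (d:ℂ)⁻¹ := by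
      have h1 : (0:ℂ) ≤ (((d:ℝ)⁻¹ : ℝ) : ℂ) := Complex.zero_le_real.mpr (by positivity)
      have h2 : (((d:ℝ)⁻¹ : ℝ) : ℂ) = (d:ℂ)⁻¹ := by push_cast; ring
      rwa [h2] at h1
    set w2 : Matrix (Fin d × Fin d) (Fin d × Fin d) ℂ := (d:ℂ)⁻¹ • swapOp d with hw2
    set N : Matrix (Fin d × Fin d) (Fin d × Fin d) ℂ :=
      fun p q => (d:ℂ)⁻¹ * ((if p.1 = p.2 then 1 else 0) * (if q.1 = q.2 then 1 else 0)) with hN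
    have hpt2 : ptransposeA w2 = N := by
      funext p q
      simp only [ptransposeA, hw2, hN, Matrix.smul_apply, swapOp, smul_eq_mul]
      congr 1
      split_ifs <;> first | rfl | simp_all
    have htr2 : w2.trace = 1 := by
      rw [hw2, Matrix.trace_smul, smul_eq_mul]
      have : (swapOp d).trace = (d:ℂ) := by
        rw [Matrix.trace]
        simp only [Matrix.diag, swapOp]
        rw [Fintype.sum_prod_type]
        simp [ite_and, Finset.sum_ite_eq]
      rw [this, inv_mul_cancel₀ hd0c]
    refine ⟨w2, ?_, htr2, ?_⟩
    · rw [hpt2]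
      refine Matrix.PosSemidef.of_dotProduct_mulVec_nonneg ?_ ?_
      · ext p q
        rw [Matrix.conjTranspose_apply]
        simp only [hN, Matrix.conjTranspose_apply, star_mul', apply_ite (star : ℂ → ℂ),
          star_one, star_zero, star_inv₀, star_natCast]
        ring
      · intro v
        set s := ∑ q : Fin d × Fin d, (if q.1 = q.2 then (1:ℂ) else 0) * v q with hs
        have hstars : star s = ∑ p : Fin d × Fin d, (if p.1 = p.2 then (1:ℂ) else 0) * star (v p) := by
          rw [hs, star_sum]
          refine Finset.sum_congr rfl fun q _ => ?_
          simp [star_mul', apply_ite (star : ℂ → ℂ), mul_comm]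
        have hmv : ∀ p, N.mulVec v p = (d:ℂ)⁻¹ * (if p.1 = p.2 then 1 else 0) * s := by
          intro p
          simp only [mulVec, dotProduct, hN]
          rw [hs, Finset.mul_sum]
          exact Finset.sum_congr rfl fun q _ => by ring
        have hquad : star v ⬝ᵥ N.mulVec v = (d:ℂ)⁻¹ * (star s * s) := by
          simp only [dotProduct, Pi.star_apply]
          calc ∑ p : Fin d × Fin d, star (v p) * N.mulVec v p
              = ∑ p : Fin d × Fin d, (d:ℂ)⁻¹ * (((if p.1 = p.2 then (1:ℂ) else 0) * star (v p)) * s) := by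
                refine Finset.sum_congr rfl fun p _ => ?_
                rw [hmv p]; ring
            _ = (d:ℂ)⁻¹ * ((∑ p : Fin d × Fin d, (if p.1 = p.2 then (1:ℂ) else 0) * star (v p)) * s) := by
                rw [← Finset.mul_sum, Finset.sum_mul]
            _ = (d:ℂ)⁻¹ * (star s * s) := by rw [← hstars]
        rw [hquad]
        exact mul_nonneg hdinv (star_mul_self_nonneg s)
    · rw [trace_formula hd0, htr2]
      have hS2 : (∑ i : Fin d, ∑ j : Fin d, w2 (j,i) (i,j)) = (d:ℂ) := by
        rw [hw2]
        simp only [Matrix.smul_apply, swapOp, smul_eq_mul]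
        simp only [ite_true, and_self, if_pos rfl, mul_one]
        simp [Finset.sum_const, Finset.card_univ, Fintype.card_fin]
        field_simp
      rw [hS2]
      have hd1 : ((d:ℝ) + 1) ≠ 0 := by positivity
      have : ((1 / ((d : ℝ) + 1) : ℝ) : ℂ) = 1 / ((d:ℂ) + 1) := by push_cast; ring
      rw [this]
      have hd1c : ((d:ℂ) + 1) ≠ 0 := by exact_mod_cast hd1
      field_simp
      ring
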